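/- Let (g_i)_{i≥1} be nonnegative integers with g_i = (θ/i) ρ^{−i} (1 + O((log i)^{−2})) for some θ > 0 and 0 < ρ < 1, and fix φ > 0. Choose ξ with φ ρ^{ξ/2} < 1. Then T(z) := ∑_{i≥ξ} g_i (log(1 + φ z^i) − φ z^i) defines an analytic function on the open disc |z| < ρ^{1/2}, and S(z) := (∏_{1≤i<ξ} ((1+φz^i) e^{−φ z^i})^{g_i}) e^{T(z)} is analytic on |z| < ρ^{1/2} with S(ρ) ≠ 0. -/

import Mathlib

open Filter

/-- Analytic continuation lemma for tilted selection classes: if nonnegative integers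
`g_i` satisfy `g_i = (θ/i) ρ^{-i}(1 + O((log i)^{-2}))` with `θ > 0`, `0 < ρ < 1`, and
`φ > 0`, and `ξ ≥ 1` is chosen with `φ ρ^{ξ/2} < 1`, then
`T(z) = ∑_{i ≥ ξ} g_i (log(1+φ z^i) − φ z^i)` is analytic on `|z| < ρ^{1/2}`, and
`S(z) = (∏_{1 ≤ i < ξ} ((1+φ z^i) e^{−φ z^i})^{g_i}) e^{T(z)}` is analytic on
`|z| < ρ^{1/2}` with `S(ρ) ≠ 0`. -/
theorem selection_continuation (g : ℕ → ℕ) (θ ρ φ : ℝ)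
    (hθ : 0 < θ) (hρ : 0 < ρ) (hρ1 : ρ < 1) (hφ : 0 < φ)
    (hasymp : (fun i : ℕ => (g i : ℝ) * i * ρ ^ i / θ - 1)
      =O[atTop] fun i : ℕ => ((Real.log i) ^ 2)⁻¹)
    (ξ : ℕ) (hξ : 1 ≤ ξ) (hξρ : φ * ρ ^ ((ξ : ℝ) / 2) < 1) :
    AnalyticOn ℂ
      (fun z => ∑' i : ℕ,
        (g (i + ξ) : ℂ) * (Complex.log (1 + (φ : ℂ) * z ^ (i + ξ)) - (φ : ℂ) * z ^ (i + ξ)))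
      (Metric.ball (0 : ℂ) (Real.sqrt ρ)) ∧
    AnalyticOn ℂ
      (fun z =>
        (∏ i ∈ Finset.Ico 1 ξ,
            ((1 + (φ : ℂ) * z ^ i) * Complex.exp (-((φ : ℂ) * z ^ i))) ^ g i) *
          Complex.exp (∑' i : ℕ,
            (g (i + ξ) : ℂ) *
              (Complex.log (1 + (φ : ℂ) * z ^ (i + ξ)) - (φ : ℂ) * z ^ (i + ξ))))
      (Metric.ball (0 : ℂ) (Real.sqrt ρ)) ∧
    (∏ i ∈ Finset.Ico 1 ξ,
        ((1 + (φ : ℂ) * (ρ : ℂ) ^ i) * Complex.exp (-((φ : ℂ) * (ρ : ℂ) ^ i))) ^ g i) *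
      Complex.exp (∑' i : ℕ,
        (g (i + ξ) : ℂ) *
          (Complex.log (1 + (φ : ℂ) * (ρ : ℂ) ^ (i + ξ)) - (φ : ℂ) * (ρ : ℂ) ^ (i + ξ)))
      ≠ 0 := by
  have hξ0 : ξ ≠ 0 := by omega
  have hsρ0 : (0 : ℝ) < Real.sqrt ρ := Real.sqrt_pos.mpr hρ
  have hsρ1 : Real.sqrt ρ < 1 := by
    rw [show (1 : ℝ) = Real.sqrt 1 by simp]
    exact Real.sqrt_lt_sqrt hρ.le hρ1
  -- rewrite the rpow hypothesis in terms of √ρ ^ ξ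
  have hsqpow : Real.sqrt ρ ^ ξ = ρ ^ ((ξ : ℝ) / 2) := by
    rw [Real.sqrt_eq_rpow, ← Real.rpow_natCast (ρ ^ ((1 : ℝ)/2)) ξ,
      ← Real.rpow_mul hρ.le]
    ring_nf
  have hkey : φ * Real.sqrt ρ ^ ξ < 1 := by rw [hsqpow]; exact hξρ
  -- basic norm bounds
  have hbnd : ∀ s : ℝ, 0 ≤ s → s < Real.sqrt ρ → ∀ k, ξ ≤ k →
      φ * s ^ k ≤ φ * s ^ ξ ∧ φ * s ^ ξ < 1 := by
    intro s hs0 hs k hk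
    have hs1 : s ≤ 1 := le_of_lt (hs.trans hsρ1)
    constructor
    · exact mul_le_mul_of_nonneg_left (pow_le_pow_of_le_one hs0 hs1 hk) hφ.le
    · calc φ * s ^ ξ ≤ φ * Real.sqrt ρ ^ ξ := by
            exact mul_le_mul_of_nonneg_left (pow_le_pow_left₀ hs0 hs.le ξ) hφ.le
        _ < 1 := hkey
  -- eventual bound on g
  have hglim : Tendsto (fun i : ℕ => (g i : ℝ) * i * ρ ^ i / θ - 1) atTop (nhds 0) := by
    apply hasymp.trans_tendsto
    apply Tendsto.inv_tendsto_atTop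
    exact (tendsto_pow_atTop (two_ne_zero)).comp (Real.tendsto_log_atTop.comp tendsto_natCast_atTop_atTop)
  have hgev : ∀ᶠ i : ℕ in atTop, (g i : ℝ) * ρ ^ i ≤ 2 * θ := by
    filter_upwards [hglim.eventually (eventually_le_nhds (show (0:ℝ) < 1 by norm_num)),
      eventually_ge_atTop 1] with i h1 h2
    have hi1 : (1 : ℝ) ≤ (i : ℝ) := by exact_mod_cast h2
    have : (g i : ℝ) * i * ρ ^ i / θ ≤ 2 := by linarith
    have h3 : (g i : ℝ) * i * ρ ^ i ≤ 2 * θ := by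
      rw [div_le_iff₀ hθ] at this; linarith
    have h4 : (g i : ℝ) * ρ ^ i ≤ (g i : ℝ) * i * ρ ^ i :=
      mul_le_mul_of_nonneg_right
        (le_mul_of_one_le_right (Nat.cast_nonneg _) hi1) (pow_nonneg hρ.le i)
    linarith
  -- differentiability of each term on the big ball
  have hterm : ∀ k, ξ ≤ k → DifferentiableOn ℂ
      (fun z : ℂ => (g k : ℂ) * (Complex.log (1 + (φ : ℂ) * z ^ k) - (φ : ℂ) * z ^ k))
      (Metric.ball (0 : ℂ) (Real.sqrt ρ)) := by
    intro k hk z hz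
    rw [Metric.mem_ball, dist_zero_right] at hz
    have hnz : ‖(φ : ℂ) * z ^ k‖ < 1 := by
      rw [norm_mul, norm_pow, Complex.norm_real, Real.norm_of_nonneg hφ.le]
      have h := hbnd ‖z‖ (norm_nonneg z) hz k hk
      exact lt_of_le_of_lt h.1 h.2
    apply DifferentiableAt.differentiableWithinAt
    apply DifferentiableAt.const_mul
    apply DifferentiableAt.sub
    · exact (Complex.differentiableAt_log (Complex.mem_slitPlane_of_norm_lt_one hnz)).comp z
        (show DifferentiableAt ℂ (fun z : ℂ => 1 + (φ : ℂ) * z ^ k) z from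
          (differentiableAt_const _).add ((differentiableAt_const _).mul (differentiableAt_pow k)))
    · exact (differentiableAt_const _).mul (differentiableAt_pow k)
  -- differentiability of T on the big ball
  have hT : DifferentiableOn ℂ
      (fun z : ℂ => ∑' i : ℕ,
        (g (i + ξ) : ℂ) * (Complex.log (1 + (φ : ℂ) * z ^ (i + ξ)) - (φ : ℂ) * z ^ (i + ξ)))
      (Metric.ball (0 : ℂ) (Real.sqrt ρ)) := by
    intro x hx
    rw [Metric.mem_ball, dist_zero_right] at hx
    set r : ℝ := (‖x‖ + Real.sqrt ρ) / 2 with hrdef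
    have hr0 : 0 ≤ r := by positivity
    have hxr : ‖x‖ < r := by rw [hrdef]; linarith
    have hrρ : r < Real.sqrt ρ := by rw [hrdef]; linarith
    have hc1 : φ * r ^ ξ < 1 := (hbnd r hr0 hrρ ξ le_rfl).2
    have hc0 : 0 < 1 - φ * r ^ ξ := by linarith
    -- summable bound
    set u : ℕ → ℝ := fun i =>
      (g (i + ξ) : ℝ) * (φ ^ 2 * (r ^ 2) ^ (i + ξ) * (1 - φ * r ^ ξ)⁻¹ / 2) with hudef
    have hu0 : ∀ i, 0 ≤ u i := by
      intro i; rw [hudef]; positivity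
    have hr2ρ : r ^ 2 / ρ < 1 := by
      rw [div_lt_one hρ]
      exact (Real.lt_sqrt hr0).mp hrρ
    have hr2ρ0 : 0 ≤ r ^ 2 / ρ := by positivity
    have husum : Summable u := by
      apply summable_of_isBigO_nat (summable_geometric_of_lt_one hr2ρ0 hr2ρ)
      rw [Asymptotics.isBigO_iff]
      refine ⟨2 * θ * (φ ^ 2 * (1 - φ * r ^ ξ)⁻¹ / 2), ?_⟩
      have hshift : ∀ᶠ i : ℕ in atTop, (g (i + ξ) : ℝ) * ρ ^ (i + ξ) ≤ 2 * θ := by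
        have := hgev
        rw [eventually_atTop] at this ⊢
        obtain ⟨N, hN⟩ := this
        exact ⟨N, fun i hi => hN (i + ξ) (by omega)⟩
      filter_upwards [hshift] with i hi
      have huval : u i = (g (i + ξ) : ℝ) * (r ^ 2) ^ (i + ξ) * (φ ^ 2 * (1 - φ * r ^ ξ)⁻¹ / 2) := by
        rw [hudef]; ring
      have hsplit : (r ^ 2) ^ (i + ξ) = ρ ^ (i + ξ) * (r ^ 2 / ρ) ^ (i + ξ) := by
        rw [← mul_pow, mul_div_cancel₀ _ (ne_of_gt hρ)]
      have h1 : (g (i + ξ) : ℝ) * (r ^ 2) ^ (i + ξ) ≤ 2 * θ * (r ^ 2 / ρ) ^ (i + ξ) := by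
        rw [hsplit, ← mul_assoc]
        exact mul_le_mul_of_nonneg_right hi (pow_nonneg hr2ρ0 _)
      have h2 : (r ^ 2 / ρ) ^ (i + ξ) ≤ (r ^ 2 / ρ) ^ i := by
        exact pow_le_pow_of_le_one hr2ρ0 hr2ρ.le (by omega)
      have hC0 : 0 ≤ φ ^ 2 * (1 - φ * r ^ ξ)⁻¹ / 2 := by positivity
      rw [Real.norm_of_nonneg (hu0 i), Real.norm_of_nonneg (pow_nonneg hr2ρ0 i), huval]
      calc (g (i + ξ) : ℝ) * (r ^ 2) ^ (i + ξ) * (φ ^ 2 * (1 - φ * r ^ ξ)⁻¹ / 2)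
          ≤ 2 * θ * (r ^ 2 / ρ) ^ (i + ξ) * (φ ^ 2 * (1 - φ * r ^ ξ)⁻¹ / 2) :=
            mul_le_mul_of_nonneg_right h1 hC0
        _ ≤ 2 * θ * (r ^ 2 / ρ) ^ i * (φ ^ 2 * (1 - φ * r ^ ξ)⁻¹ / 2) := by
            have : (0:ℝ) ≤ 2 * θ := by positivity
            exact mul_le_mul_of_nonneg_right
              (mul_le_mul_of_nonneg_left h2 this) hC0
        _ = 2 * θ * (φ ^ 2 * (1 - φ * r ^ ξ)⁻¹ / 2) * (r ^ 2 / ρ) ^ i := by ring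
    -- uniform bound of the terms on ball 0 r
    have hdiff : DifferentiableOn ℂ
        (fun z : ℂ => ∑' i : ℕ,
          (g (i + ξ) : ℂ) * (Complex.log (1 + (φ : ℂ) * z ^ (i + ξ)) - (φ : ℂ) * z ^ (i + ξ)))
        (Metric.ball (0 : ℂ) r) := by
      apply Complex.differentiableOn_tsum_of_summable_norm husum
      · intro i
        exact (hterm (i + ξ) (by omega)).mono
          (Metric.ball_subset_ball hrρ.le)
      · exact Metric.isOpen_ball
      · intro i w hw
        rw [Metric.mem_ball, dist_zero_right] at hw
        have hwnorm : ‖(φ : ℂ) * w ^ (i + ξ)‖ ≤ φ * r ^ (i + ξ) := by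
          rw [norm_mul, norm_pow, Complex.norm_real, Real.norm_of_nonneg hφ.le]
          exact mul_le_mul_of_nonneg_left (pow_le_pow_left₀ (norm_nonneg w) hw.le _) hφ.le
        have hwc : ‖(φ : ℂ) * w ^ (i + ξ)‖ ≤ φ * r ^ ξ :=
          hwnorm.trans (hbnd r hr0 hrρ (i + ξ) (by omega)).1
        have hw1 : ‖(φ : ℂ) * w ^ (i + ξ)‖ < 1 := lt_of_le_of_lt hwc hc1
        rw [norm_mul, Complex.norm_natCast]
        have hlog := Complex.norm_log_one_add_sub_self_le hw1
        have hmb : ‖(φ : ℂ) * w ^ (i + ξ)‖ ^ 2 * (1 - ‖(φ : ℂ) * w ^ (i + ξ)‖)⁻¹ / 2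
            ≤ (φ * r ^ (i + ξ)) ^ 2 * (1 - φ * r ^ ξ)⁻¹ / 2 := by
          apply div_le_div_of_nonneg_right _ (by norm_num)
          apply mul_le_mul
          · exact pow_le_pow_left₀ (norm_nonneg _) hwnorm 2
          · exact inv_anti₀ hc0 (by linarith)
          · exact inv_nonneg.mpr (by linarith)
          · positivity
        have hgnn : (0:ℝ) ≤ (g (i + ξ) : ℝ) := Nat.cast_nonneg _
        calc (g (i + ξ) : ℝ) * ‖Complex.log (1 + (φ:ℂ) * w ^ (i + ξ)) - (φ:ℂ) * w ^ (i + ξ)‖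
            ≤ (g (i + ξ) : ℝ) * ((φ * r ^ (i + ξ)) ^ 2 * (1 - φ * r ^ ξ)⁻¹ / 2) :=
              mul_le_mul_of_nonneg_left (hlog.trans hmb) hgnn
          _ = u i := by rw [hudef]; simp only [mul_pow, ← pow_mul]; ring_nf
    exact (hdiff.differentiableAt (Metric.isOpen_ball.mem_nhds
      (by rw [Metric.mem_ball, dist_zero_right]; exact hxr))).differentiableWithinAt
  -- analyticity of T
  have hTa : AnalyticOnNhd ℂ
      (fun z : ℂ => ∑' i : ℕ,
        (g (i + ξ) : ℂ) * (Complex.log (1 + (φ : ℂ) * z ^ (i + ξ)) - (φ : ℂ) * z ^ (i + ξ)))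
      (Metric.ball (0 : ℂ) (Real.sqrt ρ)) :=
    hT.analyticOnNhd Metric.isOpen_ball
  refine ⟨hTa.analyticOn, ?_, ?_⟩
  · -- analyticity of S
    have hP : DifferentiableOn ℂ
        (fun z : ℂ => ∏ i ∈ Finset.Ico 1 ξ,
          ((1 + (φ : ℂ) * z ^ i) * Complex.exp (-((φ : ℂ) * z ^ i))) ^ g i)
        (Metric.ball (0 : ℂ) (Real.sqrt ρ)) := by
      intro x hx
      apply DifferentiableAt.differentiableWithinAt
      apply DifferentiableAt.fun_finsetProd
      intro i _
      apply DifferentiableAt.pow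
      exact ((differentiableAt_const _).add
        ((differentiableAt_const _).mul (differentiableAt_pow i))).mul
        (((differentiableAt_const _).mul (differentiableAt_pow i)).neg.cexp)
    have hS : DifferentiableOn ℂ
        (fun z : ℂ =>
          (∏ i ∈ Finset.Ico 1 ξ,
              ((1 + (φ : ℂ) * z ^ i) * Complex.exp (-((φ : ℂ) * z ^ i))) ^ g i) *
            Complex.exp (∑' i : ℕ,
              (g (i + ξ) : ℂ) *
                (Complex.log (1 + (φ : ℂ) * z ^ (i + ξ)) - (φ : ℂ) * z ^ (i + ξ))))
        (Metric.ball (0 : ℂ) (Real.sqrt ρ)) := hP.mul hT.cexp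
    exact (hS.analyticOnNhd Metric.isOpen_ball).analyticOn
  · -- nonvanishing at ρ
    refine mul_ne_zero ?_ (Complex.exp_ne_zero _)
    rw [Finset.prod_ne_zero_iff]
    intro i _
    apply pow_ne_zero
    refine mul_ne_zero ?_ (Complex.exp_ne_zero _)
    have h1 : (1 : ℂ) + (φ : ℂ) * (ρ : ℂ) ^ i = ((1 + φ * ρ ^ i : ℝ) : ℂ) := by push_cast; ring
    rw [h1]
    exact_mod_cast ne_of_gt (by positivity : (0:ℝ) < 1 + φ * ρ ^ i)
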